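/- Let X ⊆ R^2 consist of the five vertices of a regular pentagon together with its center a, and let b be a vertex. Then |sep(a,b)| = 6, and τ(X) = 6 > 5 = phi_2(6) − phi_2(5); i.e., the lower bound sum_{i=1}^{d} C(k-2,i-1) for τ(X) is not always attained. -/

import Mathlib

open scoped RealInnerProductSpace

noncomputable section

def IsPartition {α : Type*} (X : Set α) (P : Set (Set α)) : Prop :=
  (∀ U ∈ P, U.Nonempty) ∧ P.PairwiseDisjoint id ∧ ⋃₀ P = X

def Separates {α : Type*} (P : Set (Set α)) (a b : α) : Prop :=
  ∃ U ∈ P, ∃ V ∈ P, U ≠ V ∧ a ∈ U ∧ b ∈ V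

def IsFull {α : Type*} (X : Set α) (S : Set (Set (Set α))) : Prop :=
  ∀ a ∈ X, ∀ b ∈ X, a ≠ b → ∃ P ∈ S, Separates P a b

def IsTransversal {α : Type*} (X : Set α) (C T : Set (Set (Set α))) : Prop :=
  T ⊆ C ∧ ∀ S ⊆ C, IsFull X S → (S ∩ T).Nonempty

def IsMinimalTransversal {α : Type*} (X : Set α) (C T : Set (Set (Set α))) : Prop :=
  IsTransversal X C T ∧ ∀ T' ⊆ T, IsTransversal X C T' → T' = T

def sep {α : Type*} (C : Set (Set (Set α))) (a b : α) : Set (Set (Set α)) :=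
  {P ∈ C | Separates P a b}

abbrev Euc (d : ℕ) : Type := EuclideanSpace ℝ (Fin d)

def RealizedByHyperplane {d : ℕ} (X : Set (Euc d)) (P : Set (Set (Euc d))) : Prop :=
  P = {X} ∨ ∃ (v : Euc d) (c : ℝ), v ≠ 0 ∧ (∀ x ∈ X, ⟪v, x⟫ ≠ c) ∧
    (X ∩ {x | ⟪v, x⟫ < c}).Nonempty ∧ (X ∩ {x | c < ⟪v, x⟫}).Nonempty ∧
    P = {X ∩ {x | ⟪v, x⟫ < c}, X ∩ {x | c < ⟪v, x⟫}}

def HSet {d : ℕ} (X : Set (Euc d)) : Set (Set (Set (Euc d))) :=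
  {P | RealizedByHyperplane X P}

def GenPos {d : ℕ} (X : Set (Euc d)) : Prop :=
  ∀ (v : Euc d) (c : ℝ), v ≠ 0 → (X ∩ {x | ⟪v, x⟫ = c}).encard ≤ (d : ℕ∞)

def phi (d k : ℕ) : ℕ := ∑ i ∈ Finset.range (d + 1), (k - 1).choose i

def eta (d k : ℕ) : ℕ := ∑ i ∈ Finset.range (d + 1), (k - 2).choose i

def tauX {d : ℕ} (X : Set (Euc d)) : ℕ :=
  sInf {n | ∃ T, IsMinimalTransversal X (HSet X) T ∧ T.ncard = n}

def etaX {d : ℕ} (X : Set (Euc d)) : ℕ :=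
  sSup {n | ∃ T, IsMinimalTransversal X (HSet X) T ∧ T.ncard = n}

def tauD (d k : ℕ) : ℕ :=
  sInf {n | ∃ X : Set (Euc d), X.Finite ∧ GenPos X ∧ X.ncard = k ∧ tauX X = n}

def etaD (d k : ℕ) : ℕ :=
  sSup {n | ∃ X : Set (Euc d), X.Finite ∧ GenPos X ∧ X.ncard = k ∧ etaX X = n}

open Real


-- part 1 content
def pp : Fin 5 → Euc 2 := fun j => (WithLp.equiv 2 (∀ _ : Fin 2, ℝ)).symm
  ![Real.cos (2 * Real.pi * (j : ℕ) / 5), Real.sin (2 * Real.pi * (j : ℕ) / 5)]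
def XX : Set (Euc 2) := insert 0 (Set.range pp)
def K (t : ℤ) : ℝ := Real.cos (t * π / 5)
lemma Kneg (t : ℤ) : K (-t) = K t := by
  rw [K, K, show ((-t:ℤ):ℝ) * π / 5 = -(t * π / 5) by push_cast; ring, Real.cos_neg]
lemma Kper (t : ℤ) : K (10 + t) = K t := by
  have : ((10 + t : ℤ) : ℝ) * π / 5 = t * π / 5 + 2 * π := by push_cast; ring
  rw [K, this, Real.cos_add_two_pi, K]
lemma K0 : K 0 = 1 := by simp [K]
lemma K5 : K 5 = -1 := by
  rw [K, show ((5:ℤ):ℝ) * π / 5 = π by push_cast; ring, Real.cos_pi]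
lemma K1pos : 0 < K 1 := by
  rw [K]; apply Real.cos_pos_of_mem_Ioo
  constructor <;> [nlinarith [pi_pos]; nlinarith [pi_pos]]
lemma K2pos : 0 < K 2 := by
  rw [K]; apply Real.cos_pos_of_mem_Ioo
  constructor <;> [nlinarith [pi_pos]; nlinarith [pi_pos]]
lemma K3neg : K 3 < 0 := by
  rw [K]; apply Real.cos_neg_of_pi_div_two_lt_of_lt <;> nlinarith [pi_pos]
lemma K4neg : K 4 < 0 := by
  rw [K]; apply Real.cos_neg_of_pi_div_two_lt_of_lt <;> nlinarith [pi_pos]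
lemma K1lt1 : K 1 < 1 := by
  rw [K]
  have := Real.cos_lt_cos_of_nonneg_of_le_pi (x := 0) (y := ((1:ℤ):ℝ) * π / 5) le_rfl
    (by push_cast; nlinarith [pi_pos]) (by push_cast; nlinarith [pi_pos])
  simpa using this
lemma K21 : K 2 < K 1 := by
  rw [K, K]
  apply Real.cos_lt_cos_of_nonneg_of_le_pi <;> push_cast <;> nlinarith [pi_pos]
lemma K2lt1 : K 2 < 1 := lt_trans K21 K1lt1
lemma Km1 : K (-1) = K 1 := Kneg 1
lemma Km2 : K (-2) = K 2 := Kneg 2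
lemma Km3 : K (-3) = K 3 := Kneg 3
lemma Km4 : K (-4) = K 4 := Kneg 4
lemma Km5 : K (-5) = K 5 := Kneg 5
lemma K6 : K 6 = K 4 := by have := Kper (-4); rw [← Kneg 4, ← this]; norm_num
lemma K7 : K 7 = K 3 := by have := Kper (-3); rw [← Kneg 3, ← this]; norm_num
lemma K8 : K 8 = K 2 := by have := Kper (-2); rw [← Kneg 2, ← this]; norm_num
lemma K9 : K 9 = K 1 := by have := Kper (-1); rw [← Kneg 1, ← this]; norm_num
lemma Km6 : K (-6) = K 4 := by rw [Kneg 6, K6]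
lemma Km7 : K (-7) = K 3 := by rw [Kneg 7, K7]
lemma Km8 : K (-8) = K 2 := by rw [Kneg 8, K8]
lemma Km9 : K (-9) = K 1 := by rw [Kneg 9, K9]
def vdir (m : ℤ) : Euc 2 := (WithLp.equiv 2 (∀ _ : Fin 2, ℝ)).symm
  ![Real.cos (m * π / 5), Real.sin (m * π / 5)]
lemma ip (m : ℤ) (j : Fin 5) : ⟪vdir m, pp j⟫ = K (m - 2 * (j : ℕ)) := by
  simp only [vdir, pp, PiLp.inner_apply, RCLike.inner_apply, WithLp.equiv_symm_apply, PiLp.toLp_apply, WithLp.ofLp_toLp,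
    Fin.sum_univ_two, Matrix.cons_val_zero, Matrix.cons_val_one, Matrix.head_cons,
    starRingEnd_apply, star_trivial]
  rw [show (2 * π * (j:ℕ) / 5 : ℝ) = ((2 * (j:ℕ) : ℤ) : ℝ) * π / 5 by push_cast; ring,
    ← Real.cos_sub, K, ← Real.cos_neg]
  congr 1
  push_cast; ring

-- part 2
lemma pp_eq_vdir (j : Fin 5) : pp j = vdir (2 * (j:ℕ)) := by
  have h1 : (2 * π * (j:ℕ) / 5 : ℝ) = ((2 * (j:ℕ) : ℤ) : ℝ) * π / 5 := by push_cast; ring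
  simp only [pp, vdir, h1]

lemma ipp (i j : Fin 5) : ⟪pp i, pp j⟫ = K (2 * (i:ℕ) - 2 * (j:ℕ)) := by
  rw [pp_eq_vdir i, ip]

lemma pp_inj : Function.Injective pp := by
  intro i j h
  by_contra hne
  have h2 : K (2 * ((j : Fin 5):ℕ) - 2 * (j:ℕ)) = K (2 * ((i : Fin 5):ℕ) - 2 * (j:ℕ)) := by
    calc K (2 * (j:ℕ) - 2 * (j:ℕ)) = ⟪pp j, pp j⟫ := (ipp j j).symm
    _ = ⟪pp i, pp j⟫ := by rw [h]
    _ = K (2 * (i:ℕ) - 2 * (j:ℕ)) := ipp i j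
  fin_cases i <;> fin_cases j <;>
    first
    | exact hne rfl
    | (norm_num [K0, K6, K8, Km2, Km4, Km6, Km8] at h2; linarith [K2lt1, K4neg])

lemma zero_notin_range : (0 : Euc 2) ∉ Set.range pp := by
  rintro ⟨j, hj⟩
  have h := ipp j j
  rw [hj, inner_zero_left] at h
  simp only [sub_self] at h
  rw [K0] at h
  linarith

def Pa (F : Finset (Fin 5)) : Set (Set (Euc 2)) :=
  {insert 0 (pp '' (↑F : Set (Fin 5))ᶜ), pp '' ↑F}

lemma cut (F : Finset (Fin 5)) (hF : F.Nonempty) (v : Euc 2) (c : ℝ) (hc : 0 < c)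
    (hin : ∀ j ∈ F, c < ⟪v, pp j⟫) (hout : ∀ j ∉ F, ⟪v, pp j⟫ < c) :
    Pa F ∈ HSet XX := by
  obtain ⟨j0, hj0⟩ := hF
  have hv : v ≠ 0 := by
    rintro rfl
    have h := hin j0 hj0
    rw [inner_zero_left] at h; linarith
  have e2 : XX ∩ {x | c < ⟪v, x⟫} = pp '' ↑F := by
    ext x
    constructor
    · rintro ⟨hx, hx2⟩
      rw [Set.mem_setOf_eq] at hx2
      rcases hx with rfl | ⟨j, rfl⟩
      · rw [inner_zero_right] at hx2; linarith
      · by_cases hj : j ∈ F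
        · exact ⟨j, hj, rfl⟩
        · exact absurd hx2 (by have := hout j hj; linarith)
    · rintro ⟨j, hj, rfl⟩
      exact ⟨Set.mem_insert_of_mem _ ⟨j, rfl⟩, hin j hj⟩
  have e1 : XX ∩ {x | ⟪v, x⟫ < c} = insert 0 (pp '' (↑F : Set (Fin 5))ᶜ) := by
    ext x
    constructor
    · rintro ⟨hx, hx2⟩
      rw [Set.mem_setOf_eq] at hx2
      rcases hx with rfl | ⟨j, rfl⟩
      · exact Set.mem_insert _ _
      · by_cases hj : j ∈ F
        · exact absurd hx2 (by have := hin j hj; linarith)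
        · exact Set.mem_insert_of_mem _ ⟨j, by simpa using hj, rfl⟩
    · rintro (rfl | ⟨j, hj, rfl⟩)
      · exact ⟨Set.mem_insert _ _, by rw [Set.mem_setOf_eq, inner_zero_right]; exact hc⟩
      · exact ⟨Set.mem_insert_of_mem _ ⟨j, rfl⟩, hout j (by simpa using hj)⟩
  refine Or.inr ⟨v, c, hv, ?_, ?_, ?_, ?_⟩
  · rintro x (rfl | ⟨j, rfl⟩)
    · rw [inner_zero_right]; exact ne_of_lt hc
    · by_cases hj : j ∈ F
      · exact ne_of_gt (hin j hj)
      · exact ne_of_lt (hout j hj)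
  · exact ⟨0, Set.mem_insert _ _, by rw [Set.mem_setOf_eq, inner_zero_right]; exact hc⟩
  · exact ⟨pp j0, Set.mem_insert_of_mem _ ⟨j0, rfl⟩, hin j0 hj0⟩
  · rw [e1, e2]; rfl

def Arcs15 : Finset (Finset (Fin 5)) :=
  {{0},{1},{2},{3},{4},{0,1},{1,2},{2,3},{3,4},{4,0},{0,1,2},{1,2,3},{2,3,4},{3,4,0},{4,0,1}}

lemma real15 : ∀ F ∈ Arcs15, Pa F ∈ HSet XX := by
  intro F hF
  fin_cases hF
  · refine cut _ (by decide) (vdir 0) (K 1) (by linarith [K1pos, K2pos]) ?_ ?_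
    · intro j hj
      fin_cases j <;>
        first
          | exact absurd hj (by decide)
          | (rw [ip]; norm_num [K0,K5,K6,K7,K8,K9,Km1,Km2,Km3,Km4,Km5,Km6,Km7,Km8,Km9]; linarith [K1pos,K2pos,K3neg,K4neg,K1lt1,K21,K2lt1])
    · intro j hj
      fin_cases j <;>
        first
          | exact absurd (by decide) hj
          | (rw [ip]; norm_num [K0,K5,K6,K7,K8,K9,Km1,Km2,Km3,Km4,Km5,Km6,Km7,Km8,Km9]; linarith [K1pos,K2pos,K3neg,K4neg,K1lt1,K21,K2lt1])
  · refine cut _ (by decide) (vdir 2) (K 1) (by linarith [K1pos, K2pos]) ?_ ?_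
    · intro j hj
      fin_cases j <;>
        first
          | exact absurd hj (by decide)
          | (rw [ip]; norm_num [K0,K5,K6,K7,K8,K9,Km1,Km2,Km3,Km4,Km5,Km6,Km7,Km8,Km9]; linarith [K1pos,K2pos,K3neg,K4neg,K1lt1,K21,K2lt1])
    · intro j hj
      fin_cases j <;>
        first
          | exact absurd (by decide) hj
          | (rw [ip]; norm_num [K0,K5,K6,K7,K8,K9,Km1,Km2,Km3,Km4,Km5,Km6,Km7,Km8,Km9]; linarith [K1pos,K2pos,K3neg,K4neg,K1lt1,K21,K2lt1])
  · refine cut _ (by decide) (vdir 4) (K 1) (by linarith [K1pos, K2pos]) ?_ ?_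
    · intro j hj
      fin_cases j <;>
        first
          | exact absurd hj (by decide)
          | (rw [ip]; norm_num [K0,K5,K6,K7,K8,K9,Km1,Km2,Km3,Km4,Km5,Km6,Km7,Km8,Km9]; linarith [K1pos,K2pos,K3neg,K4neg,K1lt1,K21,K2lt1])
    · intro j hj
      fin_cases j <;>
        first
          | exact absurd (by decide) hj
          | (rw [ip]; norm_num [K0,K5,K6,K7,K8,K9,Km1,Km2,Km3,Km4,Km5,Km6,Km7,Km8,Km9]; linarith [K1pos,K2pos,K3neg,K4neg,K1lt1,K21,K2lt1])
  · refine cut _ (by decide) (vdir 6) (K 1) (by linarith [K1pos, K2pos]) ?_ ?_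
    · intro j hj
      fin_cases j <;>
        first
          | exact absurd hj (by decide)
          | (rw [ip]; norm_num [K0,K5,K6,K7,K8,K9,Km1,Km2,Km3,Km4,Km5,Km6,Km7,Km8,Km9]; linarith [K1pos,K2pos,K3neg,K4neg,K1lt1,K21,K2lt1])
    · intro j hj
      fin_cases j <;>
        first
          | exact absurd (by decide) hj
          | (rw [ip]; norm_num [K0,K5,K6,K7,K8,K9,Km1,Km2,Km3,Km4,Km5,Km6,Km7,Km8,Km9]; linarith [K1pos,K2pos,K3neg,K4neg,K1lt1,K21,K2lt1])
  · refine cut _ (by decide) (vdir 8) (K 1) (by linarith [K1pos, K2pos]) ?_ ?_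
    · intro j hj
      fin_cases j <;>
        first
          | exact absurd hj (by decide)
          | (rw [ip]; norm_num [K0,K5,K6,K7,K8,K9,Km1,Km2,Km3,Km4,Km5,Km6,Km7,Km8,Km9]; linarith [K1pos,K2pos,K3neg,K4neg,K1lt1,K21,K2lt1])
    · intro j hj
      fin_cases j <;>
        first
          | exact absurd (by decide) hj
          | (rw [ip]; norm_num [K0,K5,K6,K7,K8,K9,Km1,Km2,Km3,Km4,Km5,Km6,Km7,Km8,Km9]; linarith [K1pos,K2pos,K3neg,K4neg,K1lt1,K21,K2lt1])
  · refine cut _ (by decide) (vdir 1) (K 1 / 2) (by linarith [K1pos, K2pos]) ?_ ?_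
    · intro j hj
      fin_cases j <;>
        first
          | exact absurd hj (by decide)
          | (rw [ip]; norm_num [K0,K5,K6,K7,K8,K9,Km1,Km2,Km3,Km4,Km5,Km6,Km7,Km8,Km9]; linarith [K1pos,K2pos,K3neg,K4neg,K1lt1,K21,K2lt1])
    · intro j hj
      fin_cases j <;>
        first
          | exact absurd (by decide) hj
          | (rw [ip]; norm_num [K0,K5,K6,K7,K8,K9,Km1,Km2,Km3,Km4,Km5,Km6,Km7,Km8,Km9]; linarith [K1pos,K2pos,K3neg,K4neg,K1lt1,K21,K2lt1])
  · refine cut _ (by decide) (vdir 3) (K 1 / 2) (by linarith [K1pos, K2pos]) ?_ ?_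
    · intro j hj
      fin_cases j <;>
        first
          | exact absurd hj (by decide)
          | (rw [ip]; norm_num [K0,K5,K6,K7,K8,K9,Km1,Km2,Km3,Km4,Km5,Km6,Km7,Km8,Km9]; linarith [K1pos,K2pos,K3neg,K4neg,K1lt1,K21,K2lt1])
    · intro j hj
      fin_cases j <;>
        first
          | exact absurd (by decide) hj
          | (rw [ip]; norm_num [K0,K5,K6,K7,K8,K9,Km1,Km2,Km3,Km4,Km5,Km6,Km7,Km8,Km9]; linarith [K1pos,K2pos,K3neg,K4neg,K1lt1,K21,K2lt1])
  · refine cut _ (by decide) (vdir 5) (K 1 / 2) (by linarith [K1pos, K2pos]) ?_ ?_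
    · intro j hj
      fin_cases j <;>
        first
          | exact absurd hj (by decide)
          | (rw [ip]; norm_num [K0,K5,K6,K7,K8,K9,Km1,Km2,Km3,Km4,Km5,Km6,Km7,Km8,Km9]; linarith [K1pos,K2pos,K3neg,K4neg,K1lt1,K21,K2lt1])
    · intro j hj
      fin_cases j <;>
        first
          | exact absurd (by decide) hj
          | (rw [ip]; norm_num [K0,K5,K6,K7,K8,K9,Km1,Km2,Km3,Km4,Km5,Km6,Km7,Km8,Km9]; linarith [K1pos,K2pos,K3neg,K4neg,K1lt1,K21,K2lt1])
  · refine cut _ (by decide) (vdir 7) (K 1 / 2) (by linarith [K1pos, K2pos]) ?_ ?_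
    · intro j hj
      fin_cases j <;>
        first
          | exact absurd hj (by decide)
          | (rw [ip]; norm_num [K0,K5,K6,K7,K8,K9,Km1,Km2,Km3,Km4,Km5,Km6,Km7,Km8,Km9]; linarith [K1pos,K2pos,K3neg,K4neg,K1lt1,K21,K2lt1])
    · intro j hj
      fin_cases j <;>
        first
          | exact absurd (by decide) hj
          | (rw [ip]; norm_num [K0,K5,K6,K7,K8,K9,Km1,Km2,Km3,Km4,Km5,Km6,Km7,Km8,Km9]; linarith [K1pos,K2pos,K3neg,K4neg,K1lt1,K21,K2lt1])
  · refine cut _ (by decide) (vdir 9) (K 1 / 2) (by linarith [K1pos, K2pos]) ?_ ?_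
    · intro j hj
      fin_cases j <;>
        first
          | exact absurd hj (by decide)
          | (rw [ip]; norm_num [K0,K5,K6,K7,K8,K9,Km1,Km2,Km3,Km4,Km5,Km6,Km7,Km8,Km9]; linarith [K1pos,K2pos,K3neg,K4neg,K1lt1,K21,K2lt1])
    · intro j hj
      fin_cases j <;>
        first
          | exact absurd (by decide) hj
          | (rw [ip]; norm_num [K0,K5,K6,K7,K8,K9,Km1,Km2,Km3,Km4,Km5,Km6,Km7,Km8,Km9]; linarith [K1pos,K2pos,K3neg,K4neg,K1lt1,K21,K2lt1])
  · refine cut _ (by decide) (vdir 2) (K 2 / 2) (by linarith [K1pos, K2pos]) ?_ ?_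
    · intro j hj
      fin_cases j <;>
        first
          | exact absurd hj (by decide)
          | (rw [ip]; norm_num [K0,K5,K6,K7,K8,K9,Km1,Km2,Km3,Km4,Km5,Km6,Km7,Km8,Km9]; linarith [K1pos,K2pos,K3neg,K4neg,K1lt1,K21,K2lt1])
    · intro j hj
      fin_cases j <;>
        first
          | exact absurd (by decide) hj
          | (rw [ip]; norm_num [K0,K5,K6,K7,K8,K9,Km1,Km2,Km3,Km4,Km5,Km6,Km7,Km8,Km9]; linarith [K1pos,K2pos,K3neg,K4neg,K1lt1,K21,K2lt1])
  · refine cut _ (by decide) (vdir 4) (K 2 / 2) (by linarith [K1pos, K2pos]) ?_ ?_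
    · intro j hj
      fin_cases j <;>
        first
          | exact absurd hj (by decide)
          | (rw [ip]; norm_num [K0,K5,K6,K7,K8,K9,Km1,Km2,Km3,Km4,Km5,Km6,Km7,Km8,Km9]; linarith [K1pos,K2pos,K3neg,K4neg,K1lt1,K21,K2lt1])
    · intro j hj
      fin_cases j <;>
        first
          | exact absurd (by decide) hj
          | (rw [ip]; norm_num [K0,K5,K6,K7,K8,K9,Km1,Km2,Km3,Km4,Km5,Km6,Km7,Km8,Km9]; linarith [K1pos,K2pos,K3neg,K4neg,K1lt1,K21,K2lt1])
  · refine cut _ (by decide) (vdir 6) (K 2 / 2) (by linarith [K1pos, K2pos]) ?_ ?_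
    · intro j hj
      fin_cases j <;>
        first
          | exact absurd hj (by decide)
          | (rw [ip]; norm_num [K0,K5,K6,K7,K8,K9,Km1,Km2,Km3,Km4,Km5,Km6,Km7,Km8,Km9]; linarith [K1pos,K2pos,K3neg,K4neg,K1lt1,K21,K2lt1])
    · intro j hj
      fin_cases j <;>
        first
          | exact absurd (by decide) hj
          | (rw [ip]; norm_num [K0,K5,K6,K7,K8,K9,Km1,Km2,Km3,Km4,Km5,Km6,Km7,Km8,Km9]; linarith [K1pos,K2pos,K3neg,K4neg,K1lt1,K21,K2lt1])
  · refine cut _ (by decide) (vdir 8) (K 2 / 2) (by linarith [K1pos, K2pos]) ?_ ?_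
    · intro j hj
      fin_cases j <;>
        first
          | exact absurd hj (by decide)
          | (rw [ip]; norm_num [K0,K5,K6,K7,K8,K9,Km1,Km2,Km3,Km4,Km5,Km6,Km7,Km8,Km9]; linarith [K1pos,K2pos,K3neg,K4neg,K1lt1,K21,K2lt1])
    · intro j hj
      fin_cases j <;>
        first
          | exact absurd (by decide) hj
          | (rw [ip]; norm_num [K0,K5,K6,K7,K8,K9,Km1,Km2,Km3,Km4,Km5,Km6,Km7,Km8,Km9]; linarith [K1pos,K2pos,K3neg,K4neg,K1lt1,K21,K2lt1])
  · refine cut _ (by decide) (vdir 0) (K 2 / 2) (by linarith [K1pos, K2pos]) ?_ ?_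
    · intro j hj
      fin_cases j <;>
        first
          | exact absurd hj (by decide)
          | (rw [ip]; norm_num [K0,K5,K6,K7,K8,K9,Km1,Km2,Km3,Km4,Km5,Km6,Km7,Km8,Km9]; linarith [K1pos,K2pos,K3neg,K4neg,K1lt1,K21,K2lt1])
    · intro j hj
      fin_cases j <;>
        first
          | exact absurd (by decide) hj
          | (rw [ip]; norm_num [K0,K5,K6,K7,K8,K9,Km1,Km2,Km3,Km4,Km5,Km6,Km7,Km8,Km9]; linarith [K1pos,K2pos,K3neg,K4neg,K1lt1,K21,K2lt1])

def Q (v : Euc 2) (m : ℤ) : ℝ := ⟪v, vdir m⟫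

lemma Qexp (v : Euc 2) (m : ℤ) :
    Q v m = v 0 * Real.cos (m * π / 5) + v 1 * Real.sin (m * π / 5) := by
  simp only [Q, vdir, PiLp.inner_apply, RCLike.inner_apply, WithLp.equiv_symm_apply, PiLp.toLp_apply, WithLp.ofLp_toLp,
    Fin.sum_univ_two, Matrix.cons_val_zero, Matrix.cons_val_one, Matrix.head_cons,
    starRingEnd_apply, star_trivial]
  ring

lemma ppQ (v : Euc 2) (j : Fin 5) : ⟪v, pp j⟫ = Q v (2 * (j:ℕ)) := by
  rw [pp_eq_vdir]; rfl

lemma Qadd2 (v : Euc 2) (m : ℤ) :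
    Q v (m - 2) + Q v (m + 2) = (2 * K 2) * Q v m := by
  rw [Qexp, Qexp, Qexp, K,
    show ((m-2:ℤ):ℝ) * π / 5 = (m:ℝ) * π / 5 - 2 * π / 5 by push_cast; ring,
    show ((m+2:ℤ):ℝ) * π / 5 = (m:ℝ) * π / 5 + 2 * π / 5 by push_cast; ring,
    show ((2:ℤ):ℝ) * π / 5 = 2 * π / 5 by norm_num,
    Real.cos_sub, Real.cos_add, Real.sin_sub, Real.sin_add]
  ring

lemma Qadd4 (v : Euc 2) (m : ℤ) :
    Q v (m - 4) + Q v (m + 4) = (2 * K 4) * Q v m := by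
  rw [Qexp, Qexp, Qexp, K,
    show ((m-4:ℤ):ℝ) * π / 5 = (m:ℝ) * π / 5 - 4 * π / 5 by push_cast; ring,
    show ((m+4:ℤ):ℝ) * π / 5 = (m:ℝ) * π / 5 + 4 * π / 5 by push_cast; ring,
    show ((4:ℤ):ℝ) * π / 5 = 4 * π / 5 by norm_num,
    Real.cos_sub, Real.cos_add, Real.sin_sub, Real.sin_add]
  ring

lemma Qper (v : Euc 2) (m : ℤ) : Q v (m + 10) = Q v m := by
  rw [Qexp, Qexp,
    show ((m+10:ℤ):ℝ) * π / 5 = (m:ℝ) * π / 5 + 2 * π by push_cast; ring,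
    Real.cos_add_two_pi, Real.sin_add_two_pi]

lemma fv0 : ((0:Fin 5):ℕ) = 0 := rfl
lemma fv1 : ((1:Fin 5):ℕ) = 1 := rfl
lemma fv2 : ((2:Fin 5):ℕ) = 2 := rfl
lemma fv3 : ((3:Fin 5):ℕ) = 3 := rfl
lemma fv4 : ((4:Fin 5):ℕ) = 4 := rfl

lemma comb : ∀ A : Finset (Fin 5), A.Nonempty →
    (∀ j : Fin 5, j + 4 ∈ A → j + 1 ∈ A → j ∈ A) →
    (∀ j : Fin 5, j + 3 ∈ A → j + 2 ∈ A → j ∉ A) → A ∈ Arcs15 := by decide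

lemma classify_aux (P : Set (Set (Euc 2))) (v : Euc 2) (c : ℝ) (hc : 0 < c)
    (hnc : ∀ x ∈ XX, ⟪v, x⟫ ≠ c)
    (hne2 : (XX ∩ {x | c < ⟪v, x⟫}).Nonempty)
    (hPeq : P = {XX ∩ {x | ⟪v, x⟫ < c}, XX ∩ {x | c < ⟪v, x⟫}}) :
    ∃ F ∈ Arcs15, P = Pa F := by
  classical
  set A := Finset.univ.filter (fun j => c < ⟪v, pp j⟫) with hA
  have memA : ∀ j, j ∈ A ↔ c < ⟪v, pp j⟫ := by intro j; simp [hA]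
  have hin : ∀ j ∈ A, c < ⟪v, pp j⟫ := fun j hj => (memA j).1 hj
  have hout : ∀ j ∉ A, ⟪v, pp j⟫ < c := by
    intro j hj
    have hq := hnc (pp j) (Set.mem_insert_of_mem _ ⟨j, rfl⟩)
    have hn : ¬ (c < ⟪v, pp j⟫) := fun h => hj ((memA j).2 h)
    exact lt_of_le_of_ne (not_lt.mp hn) hq
  have hAne : A.Nonempty := by
    obtain ⟨x, hx1, hx2⟩ := hne2
    rw [Set.mem_setOf_eq] at hx2
    rcases hx1 with rfl | ⟨j, rfl⟩
    · rw [inner_zero_right] at hx2; linarith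
    · exact ⟨j, (memA j).2 hx2⟩
  have r10 : ((4:Fin 5) ∈ A) → ((1:Fin 5) ∈ A) → ((0:Fin 5) ∈ A) := by
    rw [memA, memA, memA, ppQ, ppQ, ppQ]
    norm_num [fv0, fv1, fv2, fv3, fv4]
    intro h1 h2
    have e := Qadd2 v 0
    have hp := Qper v (-2)
    norm_num at e hp
    nlinarith [h1, h2, e, hp, mul_pos K2pos hc, mul_pos (sub_pos.mpr K2lt1) hc]
  have r11 : ((0:Fin 5) ∈ A) → ((2:Fin 5) ∈ A) → ((1:Fin 5) ∈ A) := by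
    rw [memA, memA, memA, ppQ, ppQ, ppQ]
    norm_num [fv0, fv1, fv2, fv3, fv4]
    intro h1 h2
    have e := Qadd2 v 2
    have hp := Qper v (0)
    norm_num at e hp
    nlinarith [h1, h2, e, hp, mul_pos K2pos hc, mul_pos (sub_pos.mpr K2lt1) hc]
  have r12 : ((1:Fin 5) ∈ A) → ((3:Fin 5) ∈ A) → ((2:Fin 5) ∈ A) := by
    rw [memA, memA, memA, ppQ, ppQ, ppQ]
    norm_num [fv0, fv1, fv2, fv3, fv4]
    intro h1 h2
    have e := Qadd2 v 4
    have hp := Qper v (0)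
    norm_num at e hp
    nlinarith [h1, h2, e, hp, mul_pos K2pos hc, mul_pos (sub_pos.mpr K2lt1) hc]
  have r13 : ((2:Fin 5) ∈ A) → ((4:Fin 5) ∈ A) → ((3:Fin 5) ∈ A) := by
    rw [memA, memA, memA, ppQ, ppQ, ppQ]
    norm_num [fv0, fv1, fv2, fv3, fv4]
    intro h1 h2
    have e := Qadd2 v 6
    have hp := Qper v (0)
    norm_num at e hp
    nlinarith [h1, h2, e, hp, mul_pos K2pos hc, mul_pos (sub_pos.mpr K2lt1) hc]
  have r14 : ((3:Fin 5) ∈ A) → ((0:Fin 5) ∈ A) → ((4:Fin 5) ∈ A) := by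
    rw [memA, memA, memA, ppQ, ppQ, ppQ]
    norm_num [fv0, fv1, fv2, fv3, fv4]
    intro h1 h2
    have e := Qadd2 v 8
    have hp := Qper v (0)
    norm_num at e hp
    nlinarith [h1, h2, e, hp, mul_pos K2pos hc, mul_pos (sub_pos.mpr K2lt1) hc]
  have r20 : ((3:Fin 5) ∈ A) → ((2:Fin 5) ∈ A) → ((0:Fin 5) ∉ A) := by
    rw [memA, memA, memA, ppQ, ppQ, ppQ]
    norm_num [fv0, fv1, fv2, fv3, fv4]
    intro h1 h2
    by_contra hcon
    push_neg at hcon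
    have h0 := hcon
    have e := Qadd4 v 0
    have hp := Qper v (-4)
    norm_num at e hp
    nlinarith [h1, h2, h0, e, hp, mul_neg_of_neg_of_pos K4neg (lt_trans hc h0)]
  have r21 : ((4:Fin 5) ∈ A) → ((3:Fin 5) ∈ A) → ((1:Fin 5) ∉ A) := by
    rw [memA, memA, memA, ppQ, ppQ, ppQ]
    norm_num [fv0, fv1, fv2, fv3, fv4]
    intro h1 h2
    by_contra hcon
    push_neg at hcon
    have h0 := hcon
    have e := Qadd4 v 2
    have hp := Qper v (-2)
    norm_num at e hp
    nlinarith [h1, h2, h0, e, hp, mul_neg_of_neg_of_pos K4neg (lt_trans hc h0)]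
  have r22 : ((0:Fin 5) ∈ A) → ((4:Fin 5) ∈ A) → ((2:Fin 5) ∉ A) := by
    rw [memA, memA, memA, ppQ, ppQ, ppQ]
    norm_num [fv0, fv1, fv2, fv3, fv4]
    intro h1 h2
    by_contra hcon
    push_neg at hcon
    have h0 := hcon
    have e := Qadd4 v 4
    have hp := Qper v (0)
    norm_num at e hp
    nlinarith [h1, h2, h0, e, hp, mul_neg_of_neg_of_pos K4neg (lt_trans hc h0)]
  have r23 : ((1:Fin 5) ∈ A) → ((0:Fin 5) ∈ A) → ((3:Fin 5) ∉ A) := by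
    rw [memA, memA, memA, ppQ, ppQ, ppQ]
    norm_num [fv0, fv1, fv2, fv3, fv4]
    intro h1 h2
    by_contra hcon
    push_neg at hcon
    have h0 := hcon
    have e := Qadd4 v 6
    have hp := Qper v (0)
    norm_num at e hp
    nlinarith [h1, h2, h0, e, hp, mul_neg_of_neg_of_pos K4neg (lt_trans hc h0)]
  have r24 : ((2:Fin 5) ∈ A) → ((1:Fin 5) ∈ A) → ((4:Fin 5) ∉ A) := by
    rw [memA, memA, memA, ppQ, ppQ, ppQ]
    norm_num [fv0, fv1, fv2, fv3, fv4]
    intro h1 h2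
    by_contra hcon
    push_neg at hcon
    have h0 := hcon
    have e := Qadd4 v 8
    have hp := Qper v (2)
    norm_num at e hp
    nlinarith [h1, h2, h0, e, hp, mul_neg_of_neg_of_pos K4neg (lt_trans hc h0)]
  have r1 : ∀ j : Fin 5, j + 4 ∈ A → j + 1 ∈ A → j ∈ A := by
    intro j
    fin_cases j
    · exact r10
    · exact r11
    · exact r12
    · exact r13
    · exact r14
  have r2 : ∀ j : Fin 5, j + 3 ∈ A → j + 2 ∈ A → j ∉ A := by
    intro j
    fin_cases j
    · exact r20
    · exact r21
    · exact r22
    · exact r23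
    · exact r24
  refine ⟨A, comb A hAne r1 r2, ?_⟩
  have e2 : XX ∩ {x | c < ⟪v, x⟫} = pp '' ↑A := by
    ext x
    constructor
    · rintro ⟨hx, hx2⟩
      rw [Set.mem_setOf_eq] at hx2
      rcases hx with rfl | ⟨j, rfl⟩
      · rw [inner_zero_right] at hx2; linarith
      · by_cases hj : j ∈ A
        · exact ⟨j, hj, rfl⟩
        · exact absurd hx2 (by have := hout j hj; linarith)
    · rintro ⟨j, hj, rfl⟩
      exact ⟨Set.mem_insert_of_mem _ ⟨j, rfl⟩, hin j hj⟩
  have e1 : XX ∩ {x | ⟪v, x⟫ < c} = insert 0 (pp '' (↑A : Set (Fin 5))ᶜ) := by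
    ext x
    constructor
    · rintro ⟨hx, hx2⟩
      rw [Set.mem_setOf_eq] at hx2
      rcases hx with rfl | ⟨j, rfl⟩
      · exact Set.mem_insert _ _
      · by_cases hj : j ∈ A
        · exact absurd hx2 (by have := hin j hj; linarith)
        · exact Set.mem_insert_of_mem _ ⟨j, by simpa using hj, rfl⟩
    · rintro (rfl | ⟨j, hj, rfl⟩)
      · exact ⟨Set.mem_insert _ _, by rw [Set.mem_setOf_eq, inner_zero_right]; exact hc⟩
      · exact ⟨Set.mem_insert_of_mem _ ⟨j, rfl⟩, hout j (by simpa using hj)⟩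
  rw [hPeq, e1, e2]; rfl

lemma not_sep_triv (a b : Euc 2) : ¬ Separates {XX} a b := by
  rintro ⟨U, hU, V, hV, hUV, -, -⟩
  rw [Set.mem_singleton_iff] at hU hV
  exact hUV (hU.trans hV.symm)

lemma classify (P : Set (Set (Euc 2))) (hP : P ∈ HSet XX) (hPne : P ≠ {XX}) :
    ∃ F ∈ Arcs15, P = Pa F := by
  rcases hP with h | ⟨v, c, hv, hnc, hne1, hne2, hPeq⟩
  · exact absurd h hPne
  · have hc0 : c ≠ 0 := by
      have h0 := hnc 0 (Set.mem_insert _ _)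
      rw [inner_zero_right] at h0
      exact fun h => h0 h.symm
    rcases hc0.lt_or_gt with h | h
    · have s1 : {x : Euc 2 | ⟪-v, x⟫ < -c} = {x | c < ⟪v, x⟫} := by
        ext x; simp only [Set.mem_setOf_eq, inner_neg_left]; constructor <;> intro <;> linarith
      have s2 : {x : Euc 2 | -c < ⟪-v, x⟫} = {x | ⟪v, x⟫ < c} := by
        ext x; simp only [Set.mem_setOf_eq, inner_neg_left]; constructor <;> intro <;> linarith
      refine classify_aux P (-v) (-c) (by linarith) ?_ ?_ ?_
      · intro x hx
        rw [inner_neg_left]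
        exact fun hh => hnc x hx (by linarith [neg_inj.mp hh])
      · rw [s2]; exact hne1
      · rw [s1, s2, hPeq, Set.pair_comm]
    · exact classify_aux P v c h hnc hne2 hPeq


-- counting infrastructure
lemma zero_notin_img (S : Set (Fin 5)) : (0 : Euc 2) ∉ pp '' S := by
  rintro ⟨j, -, hj⟩
  exact zero_notin_range ⟨j, hj⟩

lemma Pa_inj : Function.Injective Pa := by
  intro F G h
  have h1 : pp '' ↑F ∈ Pa G := by
    rw [← h, Pa]
    exact Set.mem_insert_of_mem _ rfl
  rw [Pa, Set.mem_insert_iff, Set.mem_singleton_iff] at h1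
  rcases h1 with h1 | h1
  · exfalso
    have : (0 : Euc 2) ∈ pp '' (↑F : Set (Fin 5)) := by rw [h1]; exact Set.mem_insert _ _
    exact zero_notin_img _ this
  · exact Finset.coe_injective (Set.image_injective.mpr pp_inj h1)

lemma ncard_Pa (S : Finset (Finset (Fin 5))) : (Pa '' ↑S).ncard = S.card := by
  rw [Set.ncard_image_of_injective _ Pa_inj, Set.ncard_coe_finset]

lemma Pa_parts_ne (F : Finset (Fin 5)) :
    insert (0:Euc 2) (pp '' (↑F : Set (Fin 5))ᶜ) ≠ pp '' ↑F := by
  intro h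
  have : (0 : Euc 2) ∈ pp '' (↑F : Set (Fin 5)) := by rw [← h]; exact Set.mem_insert _ _
  exact zero_notin_img _ this

lemma mem_sep_cv (F : Finset (Fin 5)) (hF : F ∈ Arcs15) (i : Fin 5) (hi : i ∈ F) :
    Pa F ∈ sep (HSet XX) 0 (pp i) := by
  refine ⟨real15 F hF, insert 0 (pp '' (↑F : Set (Fin 5))ᶜ), Set.mem_insert _ _,
    pp '' ↑F, Set.mem_insert_of_mem _ rfl, Pa_parts_ne F, Set.mem_insert _ _, ⟨i, hi, rfl⟩⟩

lemma mem_sep_vv (F : Finset (Fin 5)) (hF : F ∈ Arcs15) (i j : Fin 5)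
    (hi : i ∈ F) (hj : j ∉ F) : Pa F ∈ sep (HSet XX) (pp i) (pp j) := by
  refine ⟨real15 F hF, pp '' ↑F, Set.mem_insert_of_mem _ rfl,
    insert 0 (pp '' (↑F : Set (Fin 5))ᶜ), Set.mem_insert _ _, (Pa_parts_ne F).symm,
    ⟨i, hi, rfl⟩, Set.mem_insert_of_mem _ ⟨j, by simpa using hj, rfl⟩⟩

lemma separates_comm {α : Type*} {P : Set (Set α)} {a b : α} :
    Separates P a b → Separates P b a := by
  rintro ⟨U, hU, V, hV, hUV, ha, hb⟩
  exact ⟨V, hV, U, hU, hUV.symm, hb, ha⟩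

lemma sep_comm {α : Type*} (C : Set (Set (Set α))) (a b : α) : sep C a b = sep C b a := by
  ext P
  exact ⟨fun ⟨h1, h2⟩ => ⟨h1, separates_comm h2⟩, fun ⟨h1, h2⟩ => ⟨h1, separates_comm h2⟩⟩

lemma HSet_fin : (HSet XX).Finite := by
  apply Set.Finite.subset ((Arcs15.finite_toSet.image Pa).insert {XX})
  intro P hP
  by_cases h : P = {XX}
  · rw [h]; exact Set.mem_insert _ _
  · obtain ⟨F, hF, rfl⟩ := classify P hP h
    exact Set.mem_insert_of_mem _ (Set.mem_image_of_mem Pa (Finset.mem_coe.mpr hF))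

lemma sep_sub_C {a b : Euc 2} : sep (HSet XX) a b ⊆ HSet XX := fun P hP => hP.1

lemma sep_fin (a b : Euc 2) : (sep (HSet XX) a b).Finite := HSet_fin.subset sep_sub_C

def S6 (j : Fin 5) : Finset (Finset (Fin 5)) :=
  {{j}, {j, j+1}, {j+4, j}, {j, j+1, j+2}, {j+4, j, j+1}, {j+3, j+4, j}}
def T1 (i : Fin 5) : Finset (Finset (Fin 5)) :=
  {{i}, {i+4, i}, {i+3, i+4, i}, {i+1}, {i+1, i+2}, {i+1, i+2, i+3}}
def T2 (i : Fin 5) : Finset (Finset (Fin 5)) :=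
  {{i}, {i+4, i}, {i, i+1}, {i+2}, {i+2, i+3}, {i+1, i+2}}
def T3 (i : Fin 5) : Finset (Finset (Fin 5)) :=
  {{i}, {i, i+1}, {i+4, i}, {i+3}, {i+3, i+4}, {i+2, i+3}}
def T4 (i : Fin 5) : Finset (Finset (Fin 5)) :=
  {{i}, {i, i+1}, {i, i+1, i+2}, {i+4}, {i+3, i+4}, {i+2, i+3, i+4}}

lemma S6_card : ∀ j : Fin 5, (S6 j).card = 6 := by decide
lemma S6_props : ∀ j : Fin 5, ∀ F ∈ S6 j, F ∈ Arcs15 ∧ j ∈ F := by decide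
lemma T1_card : ∀ i : Fin 5, (T1 i).card = 6 := by decide
lemma T1_props : ∀ i : Fin 5, ∀ F ∈ T1 i,
    F ∈ Arcs15 ∧ ((i ∈ F ∧ i+1 ∉ F) ∨ (i+1 ∈ F ∧ i ∉ F)) := by decide
lemma T2_card : ∀ i : Fin 5, (T2 i).card = 6 := by decide
lemma T2_props : ∀ i : Fin 5, ∀ F ∈ T2 i,
    F ∈ Arcs15 ∧ ((i ∈ F ∧ i+2 ∉ F) ∨ (i+2 ∈ F ∧ i ∉ F)) := by decide
lemma T3_card : ∀ i : Fin 5, (T3 i).card = 6 := by decide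
lemma T3_props : ∀ i : Fin 5, ∀ F ∈ T3 i,
    F ∈ Arcs15 ∧ ((i ∈ F ∧ i+3 ∉ F) ∨ (i+3 ∈ F ∧ i ∉ F)) := by decide
lemma T4_card : ∀ i : Fin 5, (T4 i).card = 6 := by decide
lemma T4_props : ∀ i : Fin 5, ∀ F ∈ T4 i,
    F ∈ Arcs15 ∧ ((i ∈ F ∧ i+4 ∉ F) ∨ (i+4 ∈ F ∧ i ∉ F)) := by decide

lemma six_le_of_sub {a b : Euc 2} (S : Finset (Finset (Fin 5))) (hcard : S.card = 6)
    (hsub : Pa '' ↑S ⊆ sep (HSet XX) a b) : 6 ≤ (sep (HSet XX) a b).ncard := by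
  calc 6 = (Pa '' (↑S : Set (Finset (Fin 5)))).ncard := by rw [ncard_Pa, hcard]
  _ ≤ _ := Set.ncard_le_ncard hsub (sep_fin a b)

lemma sep_cv_lb (j : Fin 5) : 6 ≤ (sep (HSet XX) 0 (pp j)).ncard := by
  refine six_le_of_sub (S6 j) (S6_card j) ?_
  rintro P ⟨F, hF, rfl⟩
  obtain ⟨h1, h2⟩ := S6_props j F (by simpa using hF)
  exact mem_sep_cv F h1 j h2

lemma sep_vv_lb (i j : Fin 5) (hij : i ≠ j) : 6 ≤ (sep (HSet XX) (pp i) (pp j)).ncard := by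
  have hd : ∀ i j : Fin 5, i ≠ j → j = i+1 ∨ j = i+2 ∨ j = i+3 ∨ j = i+4 := by decide
  have key : ∀ (S : Finset (Finset (Fin 5))), S.card = 6 →
      (∀ F ∈ S, F ∈ Arcs15 ∧ ((i ∈ F ∧ j ∉ F) ∨ (j ∈ F ∧ i ∉ F))) →
      6 ≤ (sep (HSet XX) (pp i) (pp j)).ncard := by
    intro S hcard hprops
    refine six_le_of_sub S hcard ?_
    rintro P ⟨F, hF, rfl⟩
    obtain ⟨h1, h2⟩ := hprops F (by simpa using hF)
    rcases h2 with ⟨hi, hj⟩ | ⟨hj, hi⟩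
    · exact mem_sep_vv F h1 i j hi hj
    · rw [sep_comm]
      exact mem_sep_vv F h1 j i hj hi
  rcases hd i j hij with h | h | h | h <;> subst h
  · exact key (T1 i) (T1_card i) (T1_props i)
  · exact key (T2 i) (T2_card i) (T2_props i)
  · exact key (T3 i) (T3_card i) (T3_props i)
  · exact key (T4 i) (T4_card i) (T4_props i)

lemma zero_mem_XX : (0 : Euc 2) ∈ XX := Set.mem_insert _ _
lemma pp_mem_XX (j : Fin 5) : pp j ∈ XX := Set.mem_insert_of_mem _ ⟨j, rfl⟩
lemma zero_ne_pp (j : Fin 5) : (0 : Euc 2) ≠ pp j := fun h => zero_notin_range ⟨j, h.symm⟩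

lemma sep_lb : ∀ a ∈ XX, ∀ b ∈ XX, a ≠ b → 6 ≤ (sep (HSet XX) a b).ncard := by
  intro a ha b hb hab
  rcases ha with rfl | ⟨i, rfl⟩
  · rcases hb with rfl | ⟨j, rfl⟩
    · exact absurd rfl hab
    · exact sep_cv_lb j
  · rcases hb with rfl | ⟨j, rfl⟩
    · rw [sep_comm]; exact sep_cv_lb i
    · exact sep_vv_lb i j (fun h => hab (by rw [h]))

def Arcs0 : Finset (Finset (Fin 5)) := {{0}, {0,1}, {4,0}, {0,1,2}, {4,0,1}, {3,4,0}}

lemma sep0_eq : sep (HSet XX) 0 (pp 0) = Pa '' ↑Arcs0 := by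
  apply Set.Subset.antisymm
  · rintro P ⟨hP, hsep⟩
    have hPne : P ≠ {XX} := fun h => not_sep_triv _ _ (h ▸ hsep)
    obtain ⟨F, hF, rfl⟩ := classify P hP hPne
    obtain ⟨U, hU, V, hV, hUV, h0U, hpV⟩ := hsep
    rw [Pa, Set.mem_insert_iff, Set.mem_singleton_iff] at hU hV
    have hU1 : U = insert 0 (pp '' (↑F : Set (Fin 5))ᶜ) := by
      rcases hU with h | h
      · exact h
      · exfalso; rw [h] at h0U; exact zero_notin_img _ h0U
    have hV1 : V = pp '' ↑F := by
      rcases hV with h | h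
      · exfalso; rw [hU1, h] at hUV; exact hUV rfl
      · exact h
    rw [hV1] at hpV
    obtain ⟨i, hi, hppi⟩ := hpV
    have : (0 : Fin 5) ∈ F := by rwa [← pp_inj hppi]
    have hmem : ∀ G : Finset (Fin 5), G ∈ Arcs15 → (0:Fin 5) ∈ G → G ∈ Arcs0 := by decide
    exact ⟨F, by simpa using hmem F hF this, rfl⟩
  · rintro P ⟨F, hF, rfl⟩
    have h15 : ∀ G : Finset (Fin 5), G ∈ Arcs0 → G ∈ Arcs15 ∧ (0:Fin 5) ∈ G := by decide
    obtain ⟨h1, h2⟩ := h15 F (by simpa using hF)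
    exact mem_sep_cv F h1 0 h2

lemma sep0_card : (sep (HSet XX) 0 (pp 0)).ncard = 6 := by
  rw [sep0_eq, ncard_Pa]
  decide

-- transversal theory
lemma transversal_iff (T : Set (Set (Set (Euc 2)))) :
    IsTransversal XX (HSet XX) T ↔
      T ⊆ HSet XX ∧ ∃ a ∈ XX, ∃ b ∈ XX, a ≠ b ∧ sep (HSet XX) a b ⊆ T := by
  constructor
  · rintro ⟨hTC, hT⟩
    refine ⟨hTC, ?_⟩
    by_contra hno
    push_neg at hno
    have hfull : IsFull XX (HSet XX \ T) := by
      intro a ha b hb hab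
      obtain ⟨P, hP, hPT⟩ := Set.not_subset.mp (hno a ha b hb hab)
      exact ⟨P, ⟨hP.1, hPT⟩, hP.2⟩
    obtain ⟨P, hP1, hP2⟩ := hT (HSet XX \ T) Set.diff_subset hfull
    exact hP1.2 hP2
  · rintro ⟨hTC, a, ha, b, hb, hab, hsep⟩
    refine ⟨hTC, fun S hS hfull => ?_⟩
    obtain ⟨P, hPS, hPsep⟩ := hfull a ha b hb hab
    exact ⟨P, hPS, hsep ⟨hS hPS, hPsep⟩⟩

lemma sep_transversal {a b : Euc 2} (ha : a ∈ XX) (hb : b ∈ XX) (hab : a ≠ b) :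
    IsTransversal XX (HSet XX) (sep (HSet XX) a b) :=
  (transversal_iff _).mpr ⟨sep_sub_C, a, ha, b, hb, hab, subset_rfl⟩

lemma minimal_shape (T : Set (Set (Set (Euc 2)))) (hT : IsMinimalTransversal XX (HSet XX) T) :
    ∃ a ∈ XX, ∃ b ∈ XX, a ≠ b ∧ T = sep (HSet XX) a b := by
  obtain ⟨-, a, ha, b, hb, hab, hsub⟩ := (transversal_iff T).mp hT.1
  exact ⟨a, ha, b, hb, hab, (hT.2 _ hsub (sep_transversal ha hb hab)).symm⟩

lemma min_sep0 : IsMinimalTransversal XX (HSet XX) (sep (HSet XX) 0 (pp 0)) := by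
  constructor
  · exact sep_transversal zero_mem_XX (pp_mem_XX 0) (zero_ne_pp 0)
  · intro T' hT' htrans
    obtain ⟨-, a, ha, b, hb, hab, hsub⟩ := (transversal_iff T').mp htrans
    have e : sep (HSet XX) a b = sep (HSet XX) 0 (pp 0) :=
      Set.eq_of_subset_of_ncard_le (hsub.trans hT')
        (by rw [sep0_card]; exact sep_lb a ha b hb hab) (sep_fin 0 (pp 0))
    exact Set.Subset.antisymm hT' (e ▸ hsub)

lemma tau6 : tauX XX = 6 := by
  have h6 : 6 ∈ {n | ∃ T, IsMinimalTransversal XX (HSet XX) T ∧ T.ncard = n} :=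
    ⟨sep (HSet XX) 0 (pp 0), min_sep0, sep0_card⟩
  apply le_antisymm
  · exact Nat.sInf_le h6
  · apply le_csInf ⟨6, h6⟩
    rintro n ⟨T, hT, rfl⟩
    obtain ⟨a, ha, b, hb, hab, rfl⟩ := minimal_shape T hT
    exact sep_lb a ha b hb hab

theorem stmt19 :
    ∀ pts : Fin 5 → Euc 2,
      (pts = fun (j : Fin 5) => (WithLp.equiv 2 (∀ _ : Fin 2, ℝ)).symm
        ![Real.cos (2 * Real.pi * (j : ℕ) / 5), Real.sin (2 * Real.pi * (j : ℕ) / 5)]) →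
      ∀ X : Set (Euc 2), X = insert 0 (Set.range pts) →
        (sep (HSet X) 0 (pts 0)).ncard = 6 ∧ tauX X = 6 ∧
        phi 2 6 - phi 2 5 = 5 ∧ 5 < 6 := by
  intro pts hpts X hX
  have hpp : pts = pp := by rw [hpts]; rfl
  subst hpp
  have hXX : X = XX := by rw [hX]; rfl
  subst hXX
  refine ⟨sep0_card, tau6, by decide, by norm_num⟩
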